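/- Let a, b, i, j, k, r, s be real numbers, and set c := a+b, m := c·i + a·k + a·c·r, n := c·j + b·k + b·c·r, d := i + j + k + c·r. Assume that s+1, m·s+a+c, n·s+b+c, i·s+1, j·s+1, k·s+1 and d·s+3 are all nonzero. Then (−s/(s+1)) · (c·r)/((m·s+a+c)·(n·s+b+c)) + b/((i·s+1)·(j·s+1)·(n·s+b+c)) + (a·c)/((n·s+b+c)·(m·s+a+c)·(i·s+1)) + c²/((k·s+1)·(n·s+b+c)·(m·s+a+c)) = ( (−s/(s+1))·r/(m·s+a+c) + c/((m·s+a+c)·(k·s+1)) + a/((m·s+a+c)·(i·s+1)) + (−s/(s+1))·r/(n·s+b+c) + c/((n·s+b+c)·(k·s+1)) + b/((n·s+b+c)·(j·s+1)) + 1/((i·s+1)·(j·s+1)) ) / (d·s+3). -/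

import Mathlib

lemma key_cancel (a b c r t A B I J K D : ℝ)
    (hA : A ≠ 0) (hB : B ≠ 0) (hI : I ≠ 0) (hJ : J ≠ 0) (hK : K ≠ 0) (hD : D ≠ 0)
    (hrel1 : A + B = c * D) (hrel2 : b * D + a * J = b * I + B) :
    t * (c * r / (A * B)) + b / (I * J * B) + a * c / (B * A * I) + c ^ 2 / (K * B * A)
      = (t * (r / A) + c / (A * K) + a / (A * I) + t * (r / B) + c / (B * K) + b / (B * J)
          + 1 / (I * J)) / D := by
  rw [eq_div_iff hD]
  field_simp
  linear_combination (-(t*r*I*J*K) - c*I*J - a*J*K) * hrel1 + (A*K) * hrel2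

/-- Real-number form of the cancellation identity: with `c = a+b`,
`m = c·i + a·k + a·c·r`, `n = c·j + b·k + b·c·r`, `d = i + j + k + c·r`,
and all occurring denominators nonzero, the local topological zeta function
of the curve polynomial equals `(Z1 + Z2 + R)/(d·s+3)`. -/
theorem stmt1 (a b i j k r s : ℝ) (c m n d : ℝ)
    (hc : c = a + b)
    (hm : m = c * i + a * k + a * c * r)
    (hn : n = c * j + b * k + b * c * r)
    (hd : d = i + j + k + c * r)
    (h1 : s + 1 ≠ 0) (h2 : m * s + a + c ≠ 0) (h3 : n * s + b + c ≠ 0)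
    (h4 : i * s + 1 ≠ 0) (h5 : j * s + 1 ≠ 0) (h6 : k * s + 1 ≠ 0)
    (h7 : d * s + 3 ≠ 0) :
    -s / (s + 1) * (c * r / ((m * s + a + c) * (n * s + b + c)))
      + b / ((i * s + 1) * (j * s + 1) * (n * s + b + c))
      + a * c / ((n * s + b + c) * (m * s + a + c) * (i * s + 1))
      + c ^ 2 / ((k * s + 1) * (n * s + b + c) * (m * s + a + c))
    = (-s / (s + 1) * (r / (m * s + a + c))
        + c / ((m * s + a + c) * (k * s + 1))
        + a / ((m * s + a + c) * (i * s + 1))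
        + -s / (s + 1) * (r / (n * s + b + c))
        + c / ((n * s + b + c) * (k * s + 1))
        + b / ((n * s + b + c) * (j * s + 1))
        + 1 / ((i * s + 1) * (j * s + 1))) / (d * s + 3) := by
  have hrel1 : (m * s + a + c) + (n * s + b + c) = c * (d * s + 3) := by
    subst hc hm hn hd; ring
  have hrel2 : b * (d * s + 3) + a * (j * s + 1)
      = b * (i * s + 1) + (n * s + b + c) := by
    subst hc hm hn hd; ring
  exact key_cancel a b c r (-s / (s + 1)) (m * s + a + c) (n * s + b + c)
    (i * s + 1) (j * s + 1) (k * s + 1) (d * s + 3) h2 h3 h4 h5 h6 h7 hrel1 hrel2
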